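/- For every (H, W, b) ∈ S, the empirical risk satisfies R_e(H, W, b) = (1/2)·‖W W^⊤ − √N·(I_C − (1/C)·1_C 1_C^⊤)‖_F² + (CN/2)·‖b − (1/C)·1_C‖₂². Consequently, for (H, W, b) ∈ S, R_e(H, W, b) = 0 if and only if (H, W, b) exhibits strong neural collapse; i.e., the global minimizers of R_e restricted to S are precisely the points exhibiting strong neural collapse. -/

import Mathlib

open Matrix

noncomputable section

/-- Membership in the subspace
`S = {(H, W, b) : H = (1/√N)(W ⊗ 1_N)ᵀ, 1_Cᵀ W = 0, b ∈ span{1_C}}`;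
the `CN` columns are indexed by `Fin C × Fin N`. -/
def memS (C N p : ℕ) (H : Matrix (Fin p) (Fin C × Fin N) ℝ)
    (W : Matrix (Fin C) (Fin p) ℝ) (b : Fin C → ℝ) : Prop :=
  H = Matrix.of (fun j (cn : Fin C × Fin N) => (Real.sqrt N)⁻¹ * W cn.1 j) ∧
  (∀ j : Fin p, ∑ c : Fin C, W c j = 0) ∧
  (∃ β : ℝ, b = fun _ => β)

/-- Strong neural collapse: `W Wᵀ = √N (I_C - (1/C) 1_C 1_Cᵀ)`,
`H = (1/√N)(W ⊗ 1_N)ᵀ`, and `b = (1/C) 1_C`. -/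
def SNC (C N p : ℕ) (H : Matrix (Fin p) (Fin C × Fin N) ℝ)
    (W : Matrix (Fin C) (Fin p) ℝ) (b : Fin C → ℝ) : Prop :=
  W * Wᵀ = Real.sqrt N •
    ((1 : Matrix (Fin C) (Fin C) ℝ) - (C : ℝ)⁻¹ • Matrix.of (fun _ _ => (1 : ℝ))) ∧
  H = Matrix.of (fun j (cn : Fin C × Fin N) => (Real.sqrt N)⁻¹ * W cn.1 j) ∧
  b = fun _ => (C : ℝ)⁻¹

/-- The empirical risk `R_e(H, W, b) = (1/2) ‖W H + b 1_{CN}ᵀ - I_C ⊗ 1_Nᵀ‖_F²`. -/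
def Re (C N p : ℕ) (H : Matrix (Fin p) (Fin C × Fin N) ℝ)
    (W : Matrix (Fin C) (Fin p) ℝ) (b : Fin C → ℝ) : ℝ :=
  (1 / 2) * ∑ c : Fin C, ∑ cn : Fin C × Fin N,
    ((W * H) c cn + b c - if cn.1 = c then 1 else 0) ^ 2

set_option maxHeartbeats 1000000

/-- **Statement 19.** For every `(H, W, b) ∈ S`,
`R_e(H,W,b) = (1/2) ‖W Wᵀ - √N (I_C - (1/C) 1_C 1_Cᵀ)‖_F² + (CN/2) ‖b - (1/C) 1_C‖₂²`.
Consequently, for `(H, W, b) ∈ S`, `R_e(H,W,b) = 0` iff `(H, W, b)` exhibits strong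
neural collapse; i.e. the global minimizers of `R_e` restricted to `S` are precisely
the points exhibiting strong neural collapse. -/
theorem empirical_risk_on_S (C N p : ℕ) (hC : 0 < C) (hN : 0 < N) (hp : 0 < p)
    (H : Matrix (Fin p) (Fin C × Fin N) ℝ) (W : Matrix (Fin C) (Fin p) ℝ) (b : Fin C → ℝ)
    (hS : memS C N p H W b) :
    Re C N p H W b
      = (1 / 2) * ∑ c : Fin C, ∑ c' : Fin C,
          ((W * Wᵀ) c c' - Real.sqrt N * ((if c' = c then 1 else 0) - (C : ℝ)⁻¹)) ^ 2
        + ((C * N : ℝ) / 2) * ∑ c : Fin C, (b c - (C : ℝ)⁻¹) ^ 2 ∧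
    (Re C N p H W b = 0 ↔ SNC C N p H W b) := by
  obtain ⟨hH, hWsum, β, hb⟩ := hS
  have hN0 : (0:ℝ) < N := by exact_mod_cast hN
  have hC0 : (0:ℝ) < C := by exact_mod_cast hC
  set s := Real.sqrt N with hsdef
  have hs0 : 0 < s := Real.sqrt_pos.mpr hN0
  have hs2 : s * s = (N:ℝ) := Real.mul_self_sqrt hN0.le
  have hGapp : ∀ a c : Fin C, (W * Wᵀ) a c = ∑ j, W a j * W c j := by
    intro a c; simp [Matrix.mul_apply]
  have hGsum : ∑ a : Fin C, ∑ c : Fin C, (W * Wᵀ) a c = 0 := by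
    refine Finset.sum_comm.trans ?_
    refine Finset.sum_eq_zero fun c _ => ?_
    calc ∑ a : Fin C, (W * Wᵀ) a c
        = ∑ j, (∑ a : Fin C, W a j) * W c j := by
          simp_rw [hGapp, Finset.sum_mul]; rw [Finset.sum_comm]
      _ = 0 := by simp [hWsum]
  have hWH : ∀ (a : Fin C) (cn : Fin C × Fin N), (W * H) a cn = s⁻¹ * (W * Wᵀ) a cn.1 := by
    intro a cn
    rw [hH]
    simp only [Matrix.mul_apply, Matrix.of_apply, hGapp, Finset.mul_sum]
    exact Finset.sum_congr rfl fun j _ => by ring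
  have key : Re C N p H W b
      = (1/2) * ∑ a : Fin C, ∑ c : Fin C,
          (N:ℝ) * (s⁻¹ * (W * Wᵀ) a c + β - if c = a then 1 else 0)^2 := by
    unfold Re
    congr 1
    refine Finset.sum_congr rfl fun a _ => ?_
    rw [Fintype.sum_prod_type]
    refine Finset.sum_congr rfl fun c _ => ?_
    have h1 : ∀ n : Fin N, ((W * H) a (c, n) + b a - if (c, n).1 = a then 1 else 0)^2
        = (s⁻¹ * (W * Wᵀ) a c + β - if c = a then 1 else 0)^2 := by
      intro n; rw [hWH, hb]
    simp_rw [h1]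
    simp [mul_comm]
  have expand : ∀ g d : ℝ, (N:ℝ) * (s⁻¹ * g + β - d)^2
      = (g - s*(d - (C:ℝ)⁻¹))^2 + (N:ℝ)*(β - (C:ℝ)⁻¹)^2
        + 2*s*(β - (C:ℝ)⁻¹)*(g - s*d + s/C) := by
    intro g d
    rw [← hs2]
    field_simp
    ring
  have cross : ∑ a : Fin C, ∑ c : Fin C, ((W * Wᵀ) a c - s*(if c = a then 1 else 0) + s/C) = 0 := by
    have h1 : ∀ a : Fin C, ∑ c : Fin C, ((W * Wᵀ) a c - s*(if c = a then (1:ℝ) else 0) + s/C)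
        = ∑ c : Fin C, (W * Wᵀ) a c := by
      intro a
      rw [Finset.sum_add_distrib, Finset.sum_sub_distrib, ← Finset.mul_sum]
      have hcs : (C:ℝ) * (s / C) = s := by field_simp
      simp [Finset.sum_ite_eq', Finset.sum_const, Finset.card_univ, hcs]
    simp_rw [h1]; exact hGsum
  have part1 : Re C N p H W b
      = (1 / 2) * ∑ c : Fin C, ∑ c' : Fin C,
          ((W * Wᵀ) c c' - s * ((if c' = c then 1 else 0) - (C : ℝ)⁻¹)) ^ 2
        + ((C * N : ℝ) / 2) * ∑ c : Fin C, (b c - (C : ℝ)⁻¹) ^ 2 := by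
    rw [key]
    have h2 : ∀ a c : Fin C,
        (N:ℝ) * (s⁻¹ * (W * Wᵀ) a c + β - if c = a then 1 else 0)^2
        = ((W * Wᵀ) a c - s*((if c = a then (1:ℝ) else 0) - (C:ℝ)⁻¹))^2
          + (N:ℝ)*(β - (C:ℝ)⁻¹)^2
          + 2*s*(β - (C:ℝ)⁻¹)*((W * Wᵀ) a c - s*(if c = a then 1 else 0) + s/C) := by
      intro a c; exact expand _ _
    simp_rw [h2]
    simp only [Finset.sum_add_distrib]
    simp_rw [← Finset.mul_sum]
    rw [cross, mul_zero, add_zero, hb]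
    simp only [Finset.sum_const, Finset.card_univ, Fintype.card_fin, nsmul_eq_mul]
    ring
  refine ⟨part1, ?_⟩
  -- the iff
  have hQ1 : (0:ℝ) ≤ ∑ c : Fin C, ∑ c' : Fin C,
      ((W * Wᵀ) c c' - s * ((if c' = c then 1 else 0) - (C : ℝ)⁻¹)) ^ 2 :=
    Finset.sum_nonneg fun c _ => Finset.sum_nonneg fun c' _ => sq_nonneg _
  have hQ2 : (0:ℝ) ≤ ∑ c : Fin C, (b c - (C : ℝ)⁻¹) ^ 2 :=
    Finset.sum_nonneg fun c _ => sq_nonneg _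
  constructor
  · intro h0
    rw [part1] at h0
    have hc2 : (0:ℝ) < (C * N : ℝ) / 2 := by positivity
    have hz1 : ∑ c : Fin C, ∑ c' : Fin C,
        ((W * Wᵀ) c c' - s * ((if c' = c then 1 else 0) - (C : ℝ)⁻¹)) ^ 2 = 0 := by
      nlinarith
    have hz2 : ∑ c : Fin C, (b c - (C : ℝ)⁻¹) ^ 2 = 0 := by
      nlinarith
    have he1 : ∀ c c' : Fin C,
        (W * Wᵀ) c c' = s * ((if c' = c then (1:ℝ) else 0) - (C : ℝ)⁻¹) := by
      intro c c'
      have := (Finset.sum_eq_zero_iff_of_nonneg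
        (fun c _ => Finset.sum_nonneg fun c' _ => sq_nonneg _)).mp hz1 c (Finset.mem_univ c)
      have := (Finset.sum_eq_zero_iff_of_nonneg
        (fun c' _ => sq_nonneg _)).mp this c' (Finset.mem_univ c')
      have := pow_eq_zero_iff (two_ne_zero) |>.mp this
      linarith [this]
    have he2 : ∀ c : Fin C, b c = (C : ℝ)⁻¹ := by
      intro c
      have := (Finset.sum_eq_zero_iff_of_nonneg
        (fun c _ => sq_nonneg _)).mp hz2 c (Finset.mem_univ c)
      have := pow_eq_zero_iff (two_ne_zero) |>.mp this
      linarith [this]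
    refine ⟨?_, hH, funext he2⟩
    ext c c'
    simp only [Matrix.smul_apply, Matrix.sub_apply, Matrix.one_apply, Matrix.smul_apply,
      Matrix.of_apply, smul_eq_mul]
    rw [he1 c c']
    by_cases hcc : c = c' <;> simp [hcc, eq_comm] <;> exact Or.inl hsdef
  · rintro ⟨hW, -, hbeq⟩
    rw [part1]
    have he1 : ∀ c c' : Fin C,
        (W * Wᵀ) c c' - s * ((if c' = c then (1:ℝ) else 0) - (C : ℝ)⁻¹) = 0 := by
      intro c c'
      rw [hW]
      simp only [Matrix.smul_apply, Matrix.sub_apply, Matrix.one_apply, Matrix.smul_apply,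
        Matrix.of_apply, smul_eq_mul]
      by_cases hcc : c = c' <;> simp [hcc, eq_comm] <;> ring
    have he2 : ∀ c : Fin C, b c - (C:ℝ)⁻¹ = 0 := by
      intro c; rw [hbeq]; ring
    simp_rw [he1, he2]
    simp

end
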